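/- Let n ≥ 1 and let A and B be Hermitian n×n complex matrices. Then the trace of exp(A + t•B) is a positive real number for every real t, and the function t ↦ log Tr exp(A + t•B) (taking the real part of the trace) is convex on ℝ. -/

import Mathlib

open Matrix

namespace TraceExpConvexAux

variable {n : ℕ}

lemma herm_line (A B : Matrix (Fin n) (Fin n) ℂ) (hA : A.IsHermitian) (hB : B.IsHermitian)
    (t : ℝ) : (A + (t : ℂ) • B).IsHermitian := by
  refine hA.add ?_
  unfold Matrix.IsHermitian
  rw [conjTranspose_smul, hB.eq, Complex.star_def, Complex.conj_ofReal]

lemma mul_star_self (W : Matrix.unitaryGroup (Fin n) ℂ) :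
    (W : Matrix (Fin n) (Fin n) ℂ) * star (W : Matrix (Fin n) (Fin n) ℂ) = 1 :=
  Matrix.mem_unitaryGroup_iff.mp W.2

lemma star_mul_self' (W : Matrix.unitaryGroup (Fin n) ℂ) :
    star (W : Matrix (Fin n) (Fin n) ℂ) * (W : Matrix (Fin n) (Fin n) ℂ) = 1 :=
  Matrix.mem_unitaryGroup_iff'.mp W.2

lemma exp_conj_unitary (W : Matrix.unitaryGroup (Fin n) ℂ) (M : Matrix (Fin n) (Fin n) ℂ) :
    NormedSpace.exp ((W : Matrix (Fin n) (Fin n) ℂ) * M * star (W : Matrix (Fin n) (Fin n) ℂ)) =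
      (W : Matrix (Fin n) (Fin n) ℂ) * NormedSpace.exp M *
        star (W : Matrix (Fin n) (Fin n) ℂ) := by
  have hinv : (W : Matrix (Fin n) (Fin n) ℂ)⁻¹ = star (W : Matrix (Fin n) (Fin n) ℂ) :=
    Matrix.inv_eq_left_inv (star_mul_self' W)
  have hU : IsUnit (W : Matrix (Fin n) (Fin n) ℂ) :=
    ⟨⟨(W : Matrix (Fin n) (Fin n) ℂ), star (W : Matrix (Fin n) (Fin n) ℂ),
      mul_star_self W, star_mul_self' W⟩, rfl⟩
  simpa [hinv] using Matrix.exp_conj (W : Matrix (Fin n) (Fin n) ℂ) M hU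

lemma trace_conj_unitary (W : Matrix.unitaryGroup (Fin n) ℂ) (M : Matrix (Fin n) (Fin n) ℂ) :
    ((W : Matrix (Fin n) (Fin n) ℂ) * M * star (W : Matrix (Fin n) (Fin n) ℂ)).trace = M.trace := by
  rw [Matrix.trace_mul_cycle, star_mul_self' W, Matrix.one_mul]

lemma exp_diag_complex (μ : Fin n → ℝ) :
    NormedSpace.exp (Matrix.diagonal (fun i => (μ i : ℂ))) =
      Matrix.diagonal (fun i => ((Real.exp (μ i) : ℝ) : ℂ)) := by
  have h : (fun i => NormedSpace.exp ((μ i : ℝ) : ℂ)) =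
      fun i => ((Real.exp (μ i) : ℝ) : ℂ) := by
    funext i
    rw [← Complex.exp_eq_exp_ℂ, Complex.ofReal_exp]
  rw [Matrix.exp_diagonal, Pi.exp_def, h]

/-- For a Hermitian matrix, `exp M = V * diagonal (exp ∘ eigenvalues) * V⋆`. -/
lemma exp_hermitian (M : Matrix (Fin n) (Fin n) ℂ) (hM : M.IsHermitian) :
    NormedSpace.exp M =
      (hM.eigenvectorUnitary : Matrix (Fin n) (Fin n) ℂ) *
        Matrix.diagonal (fun i => ((Real.exp (hM.eigenvalues i) : ℝ) : ℂ)) *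
        star (hM.eigenvectorUnitary : Matrix (Fin n) (Fin n) ℂ) := by
  conv_lhs => rw [hM.spectral_theorem, Unitary.conjStarAlgAut_apply]
  have h : Matrix.diagonal (RCLike.ofReal ∘ hM.eigenvalues) =
      Matrix.diagonal (fun i => ((hM.eigenvalues i : ℝ) : ℂ)) := rfl
  rw [h, exp_conj_unitary, exp_diag_complex]

/-- Trace formula for exponential of a Hermitian matrix. -/
lemma trace_exp_eq (M : Matrix (Fin n) (Fin n) ℂ) (hM : M.IsHermitian) :
    (NormedSpace.exp M).trace = ((∑ i, Real.exp (hM.eigenvalues i) : ℝ) : ℂ) := by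
  rw [exp_hermitian M hM, trace_conj_unitary, Matrix.trace_diagonal]
  push_cast
  rfl

/-- Diagonal entries via conjugation: entries of `V * diagonal d * V⋆`. -/
lemma conj_diag_entry (W : Matrix.unitaryGroup (Fin n) ℂ) (d : Fin n → ℂ) (i : Fin n) :
    ((W : Matrix (Fin n) (Fin n) ℂ) * Matrix.diagonal d *
        star (W : Matrix (Fin n) (Fin n) ℂ)) i i =
      ∑ j, (Complex.normSq ((W : Matrix (Fin n) (Fin n) ℂ) i j) : ℂ) * d j := by
  rw [Matrix.mul_apply]
  refine Finset.sum_congr rfl fun j _ => ?_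
  rw [Matrix.mul_diagonal, Matrix.star_apply]
  have h : (W : Matrix (Fin n) (Fin n) ℂ) i j * d j * star ((W : Matrix (Fin n) (Fin n) ℂ) i j) =
      ((W : Matrix (Fin n) (Fin n) ℂ) i j * star ((W : Matrix (Fin n) (Fin n) ℂ) i j)) * d j := by
    ring
  rw [h, Complex.star_def, Complex.mul_conj]

lemma row_normSq_sum (W : Matrix.unitaryGroup (Fin n) ℂ) (i : Fin n) :
    ∑ j, Complex.normSq ((W : Matrix (Fin n) (Fin n) ℂ) i j) = 1 := by
  have h2 := congrArg (fun M : Matrix (Fin n) (Fin n) ℂ => (M i i).re) (mul_star_self W)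
  simp only [Matrix.mul_apply, Matrix.one_apply_eq, Complex.one_re] at h2
  rw [Complex.re_sum] at h2
  rw [← h2]
  refine Finset.sum_congr rfl fun j _ => ?_
  rw [Matrix.star_apply, Complex.star_def, Complex.mul_conj]
  simp

/-- Peierls inequality (diagonal form). -/
lemma peierls (N : Matrix (Fin n) (Fin n) ℂ) (hN : N.IsHermitian) :
    ∑ i, Real.exp ((N i i).re) ≤ ((NormedSpace.exp N).trace).re := by
  set V := hN.eigenvectorUnitary with hV
  set μ := hN.eigenvalues with hμ
  have htr : ((NormedSpace.exp N).trace).re =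
      ∑ i, ∑ j, Complex.normSq ((V : Matrix (Fin n) (Fin n) ℂ) i j) * Real.exp (μ j) := by
    rw [exp_hermitian N hN, Matrix.trace, Complex.re_sum]
    refine Finset.sum_congr rfl fun i _ => ?_
    rw [Matrix.diag_apply, conj_diag_entry, Complex.re_sum]
    refine Finset.sum_congr rfl fun j _ => ?_
    norm_cast
  have hent : ∀ i, (N i i).re =
      ∑ j, Complex.normSq ((V : Matrix (Fin n) (Fin n) ℂ) i j) * μ j := by
    intro i
    conv_lhs => rw [hN.spectral_theorem, Unitary.conjStarAlgAut_apply]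
    have h : Matrix.diagonal (RCLike.ofReal ∘ hN.eigenvalues) =
        Matrix.diagonal (fun i => ((μ i : ℝ) : ℂ)) := rfl
    rw [h, conj_diag_entry, Complex.re_sum]
    refine Finset.sum_congr rfl fun j _ => ?_
    norm_cast
  rw [htr]
  refine Finset.sum_le_sum fun i _ => ?_
  rw [hent i]
  have hjensen := convexOn_exp.map_sum_le
    (t := Finset.univ) (w := fun j => Complex.normSq ((V : Matrix (Fin n) (Fin n) ℂ) i j))
    (p := fun j => μ j)
    (fun j _ => Complex.normSq_nonneg _) (row_normSq_sum V i) (fun j _ => Set.mem_univ _)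
  simpa [smul_eq_mul] using hjensen

/-- Supporting line for `f(s) = log (trace exp (A + s B)).re` at point `u`. -/
lemma supporting_line (A B : Matrix (Fin n) (Fin n) ℂ) (hA : A.IsHermitian) (hB : B.IsHermitian)
    (hn : 1 ≤ n) (u : ℝ) :
    ∃ c : ℝ, ∀ s : ℝ,
      Real.log ((NormedSpace.exp (A + (u : ℂ) • B)).trace).re + (s - u) * c ≤
        Real.log ((NormedSpace.exp (A + (s : ℂ) • B)).trace).re := by
  haveI : NeZero n := ⟨Nat.one_le_iff_ne_zero.mp hn⟩
  have hne : (Finset.univ : Finset (Fin n)).Nonempty := Finset.univ_nonempty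
  have hH : (A + (u : ℂ) • B).IsHermitian := herm_line A B hA hB u
  set H := A + (u : ℂ) • B with hHdef
  set V := hH.eigenvectorUnitary with hVdef
  set lam := hH.eigenvalues with hlamdef
  set B' := star (V : Matrix (Fin n) (Fin n) ℂ) * B * (V : Matrix (Fin n) (Fin n) ℂ) with hB'def
  have hB' : B'.IsHermitian := by
    rw [hB'def, Matrix.star_eq_conjTranspose]
    exact Matrix.isHermitian_conjTranspose_mul_mul _ hB
  set b := fun i => (B' i i).re with hbdef
  set Z := ∑ i, Real.exp (lam i) with hZdef
  have hZpos : 0 < Z := Finset.sum_pos (fun i _ => Real.exp_pos _) hne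
  set p := fun i => Real.exp (lam i) / Z with hpdef
  have hpnn : ∀ i ∈ (Finset.univ : Finset (Fin n)), (0 : ℝ) ≤ p i := fun i _ =>
    div_nonneg (Real.exp_pos _).le hZpos.le
  have hpsum : ∑ i, p i = 1 := by
    rw [hpdef, ← Finset.sum_div, ← hZdef]
    exact div_self hZpos.ne'
  refine ⟨∑ i, p i * b i, fun s => ?_⟩
  set c := ∑ i, p i * b i with hcdef
  set c' := s - u with hc'def
  have hdiag : star (V : Matrix (Fin n) (Fin n) ℂ) * H * (V : Matrix (Fin n) (Fin n) ℂ) =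
      Matrix.diagonal (fun i => ((lam i : ℝ) : ℂ)) := by
    have := hH.conjStarAlgAut_star_eigenvectorUnitary
    rwa [Unitary.conjStarAlgAut_star_apply] at this
  set N := Matrix.diagonal (fun i => ((lam i : ℝ) : ℂ)) + (c' : ℂ) • B' with hNdef
  have hNherm : N.IsHermitian := by
    have hd : (Matrix.diagonal (fun i => ((lam i : ℝ) : ℂ))).IsHermitian :=
      Matrix.isHermitian_diagonal_of_self_adjoint _ (by
        funext i
        simp only [Pi.star_apply, Complex.star_def, Complex.conj_ofReal])
    refine hd.add ?_
    unfold Matrix.IsHermitian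
    rw [conjTranspose_smul, hB'.eq, Complex.star_def, Complex.conj_ofReal]
  have hconj : A + (s : ℂ) • B =
      (V : Matrix (Fin n) (Fin n) ℂ) * N * star (V : Matrix (Fin n) (Fin n) ℂ) := by
    have h1 : A + (s : ℂ) • B = H + (c' : ℂ) • B := by
      rw [hHdef, hc'def]
      push_cast
      module
    have h2 : N = star (V : Matrix (Fin n) (Fin n) ℂ) * (H + (c' : ℂ) • B) *
        (V : Matrix (Fin n) (Fin n) ℂ) := by
      rw [hNdef, ← hdiag, hB'def, hHdef]
      simp only [Matrix.mul_add, Matrix.add_mul, Matrix.mul_smul, Matrix.smul_mul]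
    rw [h1, h2]
    calc H + (c' : ℂ) • B
        = ((V : Matrix (Fin n) (Fin n) ℂ) * star (V : Matrix (Fin n) (Fin n) ℂ)) *
            (H + (c' : ℂ) • B) *
            ((V : Matrix (Fin n) (Fin n) ℂ) * star (V : Matrix (Fin n) (Fin n) ℂ)) := by
          rw [mul_star_self V, Matrix.one_mul, Matrix.mul_one]
      _ = _ := by noncomm_ring
  have htrace_s : ((NormedSpace.exp (A + (s : ℂ) • B)).trace).re =
      ((NormedSpace.exp N).trace).re := by
    rw [hconj, exp_conj_unitary, trace_conj_unitary]
  -- diagonal entries of N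
  have hdiagN : ∀ i, (N i i).re = lam i + c' * b i := by
    intro i
    rw [hNdef]
    simp [Matrix.add_apply, Matrix.smul_apply, Matrix.diagonal_apply_eq, hbdef,
      Complex.add_re, Complex.ofReal_re, Complex.smul_re, smul_eq_mul]
  -- Peierls bound
  have hpeierls : ∑ i, Real.exp (lam i + c' * b i) ≤ ((NormedSpace.exp N).trace).re := by
    have := peierls N hNherm
    refine le_trans (le_of_eq ?_) this
    exact Finset.sum_congr rfl fun i _ => by rw [hdiagN i]
  -- Jensen bound
  have hjensen : Z * Real.exp (c' * c) ≤ ∑ i, Real.exp (lam i + c' * b i) := by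
    have hj := convexOn_exp.map_sum_le (t := Finset.univ) (w := p)
      (p := fun i => c' * b i) hpnn hpsum (fun i _ => Set.mem_univ _)
    simp only [smul_eq_mul] at hj
    have hsum1 : ∑ i, p i * (c' * b i) = c' * c := by
      rw [hcdef, Finset.mul_sum]
      exact Finset.sum_congr rfl fun i _ => by ring
    rw [hsum1] at hj
    have h4 : Z * ∑ i, p i * Real.exp (c' * b i) = ∑ i, Real.exp (lam i + c' * b i) := by
      rw [Finset.mul_sum]
      refine Finset.sum_congr rfl fun i _ => ?_
      rw [hpdef, Real.exp_add]
      field_simp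
    calc Z * Real.exp (c' * c) ≤ Z * ∑ i, p i * Real.exp (c' * b i) := by
          exact mul_le_mul_of_nonneg_left hj hZpos.le
      _ = _ := h4
  -- trace at u
  have htrace_u : ((NormedSpace.exp H).trace).re = Z := by
    rw [trace_exp_eq H hH, Complex.ofReal_re]
  rw [htrace_u, htrace_s]
  have hfinal : Z * Real.exp (c' * c) ≤ ((NormedSpace.exp N).trace).re :=
    le_trans hjensen hpeierls
  have hlog := Real.log_le_log (by positivity) hfinal
  rw [Real.log_mul hZpos.ne' (Real.exp_pos _).ne', Real.log_exp] at hlog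
  linarith

end TraceExpConvexAux

open TraceExpConvexAux in
/-- For Hermitian complex matrices `A`, `B`, the trace of `exp (A + t • B)` is a positive
real number for every real `t`, and `t ↦ log (Tr exp (A + t • B))` is convex on `ℝ`. -/
theorem trace_exp_pos_and_log_trace_exp_convex
    (n : ℕ) (hn : 1 ≤ n) (A B : Matrix (Fin n) (Fin n) ℂ)
    (hA : A.IsHermitian) (hB : B.IsHermitian) :
    (∀ t : ℝ,
      0 < ((NormedSpace.exp (A + (t : ℂ) • B)).trace).re ∧
      ((NormedSpace.exp (A + (t : ℂ) • B)).trace).im = 0) ∧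
    ConvexOn ℝ Set.univ
      (fun t : ℝ => Real.log ((NormedSpace.exp (A + (t : ℂ) • B)).trace).re) := by
  haveI : NeZero n := ⟨Nat.one_le_iff_ne_zero.mp hn⟩
  have hne : (Finset.univ : Finset (Fin n)).Nonempty := Finset.univ_nonempty
  constructor
  · intro t
    have hM : (A + (t : ℂ) • B).IsHermitian := herm_line A B hA hB t
    rw [trace_exp_eq _ hM]
    refine ⟨?_, Complex.ofReal_im _⟩
    rw [Complex.ofReal_re]
    exact Finset.sum_pos (fun i _ => Real.exp_pos _) hne
  · refine ⟨convex_univ, fun x _ y _ a b ha hb hab => ?_⟩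
    set u := a * x + b * y with hudef
    obtain ⟨c, hc⟩ := supporting_line A B hA hB hn u
    have h1 := hc x
    have h2 := hc y
    simp only [smul_eq_mul, ← hudef]
    have hzero : a * ((x - u) * c) + b * ((y - u) * c) = 0 := by
      rw [hudef]
      linear_combination (-(c * (a * x + b * y))) * hab
    set L := Real.log ((NormedSpace.exp (A + (u : ℂ) • B)).trace).re with hLdef
    have hL : a * L + b * L = L := by linear_combination L * hab
    linarith [mul_le_mul_of_nonneg_left h1 ha, mul_le_mul_of_nonneg_left h2 hb, hzero, hL]
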